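/- arXiv:2506.19423 — 3 statements merged into one kernel-verified Lean document; each statement's English description precedes it below -/
import Mathlib

section
/- Let K be a field of characteristic zero in which -3 is not a square, and let L = K(√-3). For every nonzero u ∈ K, u is a cube in L if and only if u is a cube in K. -/
open Polynomial

/-- Let K be a field of characteristic zero in which -3 is not a square, and
let L = K(√-3). For every nonzero u ∈ K, u is a cube in L if and only if
u is a cube in K. -/
theorem cube_in_adjoin_sqrt_neg_three_iff
    (K : Type*) [Field K] [CharZero K]
    (h3 : ¬ ∃ x : K, x ^ 2 = -3) (u : K) (hu : u ≠ 0) :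
    (∃ v : AdjoinRoot (X ^ 2 + C (3 : K)), v ^ 3 = algebraMap K _ u) ↔
      ∃ w : K, w ^ 3 = u := by
  set f : K[X] := X ^ 2 + C (3 : K) with hf
  have hfm : f.Monic := by
    simpa [hf] using monic_X_pow_add_C (3 : K) (n := 2) (by norm_num)
  have hfdeg : f.degree = 2 := by
    rw [hf]
    compute_degree!
  constructor
  · rintro ⟨v, hv⟩
    obtain ⟨p, rfl⟩ := AdjoinRoot.mk_surjective v
    set a : K := (p %ₘ f).coeff 0 with ha
    set b : K := (p %ₘ f).coeff 1 with hb
    have hdeglt : (p %ₘ f).degree ≤ 1 := by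
      have := degree_modByMonic_lt p hfm
      rw [hfdeg] at this
      exact Order.le_of_lt_succ (by exact_mod_cast this)
    have hrep : p %ₘ f = C b * X + C a := eq_X_add_C_of_degree_le_one hdeglt
    have hdvd1 : f ∣ p - (C b * X + C a) := by
      rw [← hrep]
      exact ⟨p /ₘ f, by rw [modByMonic_eq_sub_mul_div p f]; ring⟩
    have h1 : AdjoinRoot.mk f p = AdjoinRoot.mk f (C b * X + C a) :=
      AdjoinRoot.mk_eq_mk.mpr hdvd1
    have halg : algebraMap K (AdjoinRoot f) u = AdjoinRoot.mk f (C u) := rfl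
    have h2 : AdjoinRoot.mk f ((C b * X + C a) ^ 3 - C u) = 0 := by
      rw [map_sub, map_pow, ← h1, hv, halg, sub_self]
    have hdvd2 : f ∣ (C b * X + C a) ^ 3 - C u := AdjoinRoot.mk_eq_zero.mp h2
    have key : f ∣ C (3 * a ^ 2 * b - 3 * b ^ 3) * X + C (a ^ 3 - 9 * a * b ^ 2 - u) := by
      have heq : C (3 * a ^ 2 * b - 3 * b ^ 3) * X + C (a ^ 3 - 9 * a * b ^ 2 - u) =
          ((C b * X + C a) ^ 3 - C u) - f * (C (b ^ 3) * X + C (3 * a * b ^ 2)) := by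
        simp only [hf, map_sub, map_add, map_mul, map_pow, map_ofNat]
        ring
      rw [heq]
      exact dvd_sub hdvd2 (Dvd.intro _ rfl)
    have hr0 : C (3 * a ^ 2 * b - 3 * b ^ 3) * X + C (a ^ 3 - 9 * a * b ^ 2 - u) = 0 := by
      refine eq_zero_of_dvd_of_degree_lt key ?_
      calc degree _ ≤ 1 := degree_linear_le
        _ < f.degree := by rw [hfdeg]; norm_num
    have hc1 : 3 * a ^ 2 * b - 3 * b ^ 3 = 0 := by
      have := congrArg (fun q => coeff q 1) hr0
      simpa only [coeff_add, coeff_C_mul, coeff_X_one, mul_one, coeff_C, one_ne_zero,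
        if_false, add_zero, coeff_zero] using this
    have hc0 : a ^ 3 - 9 * a * b ^ 2 - u = 0 := by
      have := congrArg (fun q => coeff q 0) hr0
      simpa only [coeff_add, coeff_C_mul, coeff_X_zero, mul_zero, coeff_C, if_true,
        zero_add, coeff_zero] using this
    have hfac : b = 0 ∨ a - b = 0 ∨ a + b = 0 := by
      have h3' : (3 : K) ≠ 0 := by norm_num
      have : (3 : K) * (b * ((a - b) * (a + b))) = 0 := by linear_combination hc1
      rcases mul_eq_zero.mp this with h | h
      · exact absurd h h3'
      rcases mul_eq_zero.mp h with h | h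
      · exact Or.inl h
      rcases mul_eq_zero.mp h with h | h
      · exact Or.inr (Or.inl h)
      · exact Or.inr (Or.inr h)
    rcases hfac with h | h | h
    · exact ⟨a, by linear_combination hc0 + 9 * a * b * h⟩
    · exact ⟨-2 * a, by linear_combination hc0 - 9 * a * (a + b) * h⟩
    · exact ⟨-2 * a, by linear_combination hc0 - 9 * a * (a - b) * h⟩
  · rintro ⟨w, rfl⟩
    exact ⟨algebraMap K _ w, by rw [← map_pow]⟩
end

section
/- Let A, B be nonzero rational numbers, K a field of characteristic zero, 0 ≤ k ≤ 5, and m a positive integer dividing gcd(6, k). Set q = 6/m and r = k/m. Then the map sending (f(s), g(s)) to (f(t^q)/t^{2r}, g(t^q)/t^{3r}) defines an injective group homomorphism from E_{A,B,k,m}(K(s)) to E_{A,B}(K(t)), where E_{A,B,k,m} is the elliptic curve y² = x³ + s^k(As^m + B) over K(s) and E_{A,B} is y² = x³ + At⁶ + B over K(t). -/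
open WeierstrassCurve Polynomial
open scoped nonZeroDivisors

set_option linter.unusedSectionVars false

namespace BCAux

variable {F : Type*} [Field F] [DecidableEq F]

/-- The short Weierstrass curve y² = x³ + c. -/
abbrev Wc (c : F) : WeierstrassCurve F := ⟨0, 0, 0, 0, c⟩

lemma div_same_iff {a b c : F} (hc : c ≠ 0) : a / c = b / c ↔ a = b := by
  constructor
  · intro h; field_simp at h; exact h
  · rintro rfl; rfl

variable (σ : F →+* F) {v : F} (hv : v ≠ 0) {c c' : F} (hc : σ c = v ^ 6 * c')

include hv in
lemma div43 (n d : F) : (n / v ^ 4) / (d / v ^ 3) = (n / d) / v := by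
  by_cases hd : d = 0
  · simp [hd]
  · field_simp

include hv in
lemma div32 (n d : F) : (n / v ^ 3) / (d / v ^ 2) = (n / d) / v := by
  by_cases hd : d = 0
  · simp [hd]
  · field_simp

include hv hc in
lemma map_equation' {x y : F} :
    (Wc c').toAffine.Equation (σ x / v ^ 2) (σ y / v ^ 3) ↔ (Wc c).toAffine.Equation x y := by
  rw [Affine.equation_iff, Affine.equation_iff]
  simp only [Wc, zero_mul, mul_zero, add_zero, zero_add]
  constructor
  · intro h
    have h2 : (σ y) ^ 2 = (σ x) ^ 3 + v ^ 6 * c' := by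
      field_simp at h
      apply mul_right_cancel₀ (pow_ne_zero 6 hv)
      linear_combination v ^ 6 * h
    have h3 : σ (y ^ 2) = σ (x ^ 3 + c) := by
      rw [map_pow, map_add, map_pow, hc]; exact h2
    have := σ.injective h3
    linear_combination this
  · intro h
    have h2 : (σ y) ^ 2 = (σ x) ^ 3 + v ^ 6 * c' := by
      have h3 : (σ y) ^ 2 = (σ x) ^ 3 + σ c := by
        rw [← map_pow, ← map_pow, ← map_add]; exact congrArg σ h
      rw [h3, hc]
    field_simp
    linear_combination h2

lemma nonsingular_Wc {d : F} {x y : F} :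
    (Wc d).toAffine.Nonsingular x y ↔
      (Wc d).toAffine.Equation x y ∧ (3 * x ^ 2 ≠ 0 ∨ 2 * y ≠ 0) := by
  rw [Affine.nonsingular_iff']
  simp only [Wc, zero_mul, mul_zero, add_zero, zero_add, zero_sub, neg_ne_zero, sub_zero]

include hv hc in
lemma map_nonsingular' {x y : F} :
    (Wc c').toAffine.Nonsingular (σ x / v ^ 2) (σ y / v ^ 3) ↔
      (Wc c).toAffine.Nonsingular x y := by
  rw [nonsingular_Wc, nonsingular_Wc, map_equation' σ hv hc]
  refine and_congr_right fun _ => or_congr ?_ ?_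
  · have e1 : (3 : F) * (σ x / v ^ 2) ^ 2 = σ (3 * x ^ 2) / v ^ 4 := by
      rw [map_mul, map_pow, map_ofNat]
      ring
    rw [e1, ne_eq, _root_.div_eq_zero_iff, map_eq_zero_iff σ σ.injective]
    simp [hv]
  · have e2 : (2 : F) * (σ y / v ^ 3) = σ (2 * y) / v ^ 3 := by
      rw [map_mul, map_ofNat]
      ring
    rw [e2, ne_eq, _root_.div_eq_zero_iff, map_eq_zero_iff σ σ.injective]
    simp [hv]

include hv in
lemma map_negY' (x y : F) :
    (Wc c').toAffine.negY (σ x / v ^ 2) (σ y / v ^ 3) =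
      σ ((Wc c).toAffine.negY x y) / v ^ 3 := by
  simp only [Affine.negY, Wc, zero_mul, mul_zero, sub_zero, map_neg, neg_div]

include hv in
lemma map_addX' (x₁ x₂ L : F) :
    (Wc c').toAffine.addX (σ x₁ / v ^ 2) (σ x₂ / v ^ 2) (σ L / v) =
      σ ((Wc c).toAffine.addX x₁ x₂ L) / v ^ 2 := by
  simp only [Affine.addX, Wc, zero_mul, mul_zero, sub_zero, add_zero, zero_add, map_sub, map_pow]
  ring

include hv in
lemma map_negAddY' (x₁ x₂ y₁ L : F) :
    (Wc c').toAffine.negAddY (σ x₁ / v ^ 2) (σ x₂ / v ^ 2) (σ y₁ / v ^ 3) (σ L / v) =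
      σ ((Wc c).toAffine.negAddY x₁ x₂ y₁ L) / v ^ 3 := by
  simp only [Affine.negAddY, map_addX' σ hv (c := c), map_add, map_mul, map_sub]
  ring

include hv in
lemma map_addY' (x₁ x₂ y₁ L : F) :
    (Wc c').toAffine.addY (σ x₁ / v ^ 2) (σ x₂ / v ^ 2) (σ y₁ / v ^ 3) (σ L / v) =
      σ ((Wc c).toAffine.addY x₁ x₂ y₁ L) / v ^ 3 := by
  rw [Affine.addY, Affine.addY, map_addX' σ hv (c := c), map_negAddY' σ hv (c := c), map_negY' σ hv (c := c)]

include hv in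
lemma ρ_inj {a b : F} (h : σ a / v ^ 2 = σ b / v ^ 2) : a = b :=
  σ.injective ((div_same_iff (pow_ne_zero 2 hv)).mp h)

include hv in
lemma τ_inj {a b : F} (h : σ a / v ^ 3 = σ b / v ^ 3) : a = b :=
  σ.injective ((div_same_iff (pow_ne_zero 3 hv)).mp h)

include hv in
lemma map_slope' (x₁ x₂ y₁ y₂ : F) :
    (Wc c').toAffine.slope (σ x₁ / v ^ 2) (σ x₂ / v ^ 2) (σ y₁ / v ^ 3) (σ y₂ / v ^ 3) =
      σ ((Wc c).toAffine.slope x₁ x₂ y₁ y₂) / v := by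
  by_cases hx : x₁ = x₂
  · by_cases hy : y₁ = (Wc c).toAffine.negY x₂ y₂
    · rw [Affine.slope_of_Y_eq (by rw [hx]) (by rw [hy, map_negY' σ hv]),
        Affine.slope_of_Y_eq hx hy, map_zero, zero_div]
    · rw [Affine.slope_of_Y_ne (by rw [hx])
        (fun h => hy (τ_inj σ hv (by rw [h, map_negY' σ hv]))),
        Affine.slope_of_Y_ne hx hy]
      rw [map_negY' σ hv, map_div₀]
      rw [show σ y₁ / v ^ 3 - σ ((Wc c).toAffine.negY x₁ y₁) / v ^ 3 =
        σ (y₁ - (Wc c).toAffine.negY x₁ y₁) / v ^ 3 by rw [map_sub, sub_div]]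
      rw [show (3 : F) * (σ x₁ / v ^ 2) ^ 2 + 2 * (Wc c').a₂ * (σ x₁ / v ^ 2) + (Wc c').a₄
            - (Wc c').a₁ * (σ y₁ / v ^ 3) =
          σ (3 * x₁ ^ 2 + 2 * (Wc c).a₂ * x₁ + (Wc c).a₄ - (Wc c).a₁ * y₁) / v ^ 4 by
        simp only [Wc, zero_mul, mul_zero, add_zero, sub_zero]
        rw [map_mul, map_pow, map_ofNat]; ring]
      exact div43 hv _ _
  · rw [Affine.slope_of_X_ne (fun h => hx (ρ_inj σ hv h)), Affine.slope_of_X_ne hx,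
      map_div₀, ← sub_div, ← sub_div, ← map_sub, ← map_sub]
    exact div32 hv _ _

include hv hc in
/-- The coordinate map as a map of points. -/
noncomputable def mapFun : (Wc c).toAffine.Point → (Wc c').toAffine.Point
  | 0 => 0
  | .some _ _ h => .some _ _ ((map_nonsingular' σ hv hc).mpr h)

/-- The coordinate map as a group homomorphism of points. -/
noncomputable def pointMap : (Wc c).toAffine.Point →+ (Wc c').toAffine.Point where
  toFun := mapFun σ hv hc
  map_zero' := rfl
  map_add' := by
    rintro (_ | @⟨x₁, y₁, h₁⟩) (_ | @⟨x₂, y₂, h₂⟩)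
    any_goals rfl
    by_cases h : x₁ = x₂ ∧ y₁ = (Wc c).toAffine.negY x₂ y₂
    · simp only [Affine.Point.add_of_Y_eq h.1 h.2, mapFun]
      rw [Affine.Point.add_of_Y_eq (by rw [h.1]) (by rw [h.2, map_negY' σ hv])]
    · simp only [Affine.Point.add_some h, mapFun]
      rw [Affine.Point.add_some (fun ⟨hx, hy⟩ => h ⟨ρ_inj σ hv hx,
        τ_inj σ hv (by rw [hy, map_negY' σ hv])⟩)]
      simp only [Affine.Point.some.injEq, map_slope' σ hv (c := c), map_addX' σ hv (c := c), map_addY' σ hv (c := c)]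

lemma pointMap_some {x y : F} (h : (Wc c).toAffine.Nonsingular x y) :
    pointMap σ hv hc (.some _ _ h) = .some _ _ ((map_nonsingular' σ hv hc).mpr h) := rfl

include hv hc in
lemma pointMap_injective : Function.Injective (pointMap σ hv hc) := by
  rintro (_ | _) (_ | _) h
  any_goals contradiction
  · rfl
  · simpa only [Affine.Point.some.injEq] using
      ⟨ρ_inj σ hv (Affine.Point.some.inj h).1, τ_inj σ hv (Affine.Point.some.inj h).2⟩

lemma some_congr {R : Type*} [CommRing R] {W : WeierstrassCurve.Affine R} {x x' y y' : R}
    (hx : x = x') (hy : y = y') (h : W.Nonsingular x y) (h' : W.Nonsingular x' y') :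
    Affine.Point.some _ _ h = Affine.Point.some _ _ h' := by
  subst hx; subst hy; rfl

end BCAux

open Classical in
/-- For 0 ≤ k ≤ 5 and m a positive divisor of gcd(6,k), with q = 6/m and r = k/m,
the map (f(s), g(s)) ↦ (f(t^q)/t^{2r}, g(t^q)/t^{3r}) defines an injective group
homomorphism from E_{A,B,k,m}(K(s)) to E_{A,B}(K(t)), where E_{A,B,k,m} is
y² = x³ + s^k(As^m + B) and E_{A,B} is y² = x³ + At⁶ + B. -/
theorem base_change_injective (K : Type*) [Field K] [CharZero K]
    (A B : ℚ) (hA : A ≠ 0) (hB : B ≠ 0) (k m : ℕ) (hk : k ≤ 5)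
    (hm : 0 < m) (hdvd : m ∣ Nat.gcd 6 k) :
    ∃ φ : (⟨0, 0, 0, 0, RatFunc.X ^ k *
              ((A : RatFunc K) * RatFunc.X ^ m + (B : RatFunc K))⟩ :
            WeierstrassCurve (RatFunc K)).toAffine.Point →+
          (⟨0, 0, 0, 0, (A : RatFunc K) * RatFunc.X ^ 6 + (B : RatFunc K)⟩ :
            WeierstrassCurve (RatFunc K)).toAffine.Point,
      Function.Injective φ ∧
      ∀ (f g : RatFunc K) (h : (⟨0, 0, 0, 0, RatFunc.X ^ k *
              ((A : RatFunc K) * RatFunc.X ^ m + (B : RatFunc K))⟩ :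
            WeierstrassCurve (RatFunc K)).toAffine.Nonsingular f g),
        ∃ h' : (⟨0, 0, 0, 0, (A : RatFunc K) * RatFunc.X ^ 6 + (B : RatFunc K)⟩ :
            WeierstrassCurve (RatFunc K)).toAffine.Nonsingular
          (RatFunc.eval (algebraMap K (RatFunc K)) (RatFunc.X ^ (6 / m)) f /
            RatFunc.X ^ (2 * (k / m)))
          (RatFunc.eval (algebraMap K (RatFunc K)) (RatFunc.X ^ (6 / m)) g /
            RatFunc.X ^ (3 * (k / m))),
        φ (.some _ _ h) = .some _ _ h' := by
  have hm6 : m ∣ 6 := hdvd.trans (Nat.gcd_dvd_left 6 k)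
  have hmk : m ∣ k := hdvd.trans (Nat.gcd_dvd_right 6 k)
  have hq1 : 1 ≤ 6 / m := (Nat.one_le_div_iff hm).mpr (Nat.le_of_dvd (by norm_num) hm6)
  -- the evaluation ring homomorphism
  set f0 : K →+* RatFunc K := algebraMap K (RatFunc K) with hf0
  let φp : Polynomial K →+* RatFunc K := Polynomial.eval₂RingHom f0 (RatFunc.X ^ (6 / m))
  have hkey : ∀ p : Polynomial K, φp p =
      algebraMap (Polynomial K) (RatFunc K) (p.comp (Polynomial.X ^ (6 / m))) := by
    intro p
    have h1 : φp p = Polynomial.aeval ((RatFunc.X : RatFunc K) ^ (6 / m)) p := by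
      rw [Polynomial.aeval_def]; rfl
    have h2 : ((RatFunc.X : RatFunc K) ^ (6 / m)) =
        algebraMap (Polynomial K) (RatFunc K) (Polynomial.X ^ (6 / m)) := by
      rw [map_pow, RatFunc.algebraMap_X]
    rw [h1, h2, Polynomial.aeval_algebraMap_apply, ← Polynomial.comp_eq_aeval]
  have hinj : ∀ p : Polynomial K, p ≠ 0 → φp p ≠ 0 := by
    intro p hp
    rw [hkey]
    apply RatFunc.algebraMap_ne_zero
    rw [Ne, Polynomial.comp_eq_zero_iff]
    rintro (h | ⟨-, h⟩)
    · exact hp h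
    · have := congrArg Polynomial.natDegree h
      rw [Polynomial.natDegree_X_pow, Polynomial.natDegree_C] at this
      omega
  have hφ : (Polynomial K)⁰ ≤ (RatFunc K)⁰.comap φp := by
    intro p hp
    exact Submonoid.mem_comap.mpr
      (mem_nonZeroDivisors_of_ne_zero (hinj p (nonZeroDivisors.ne_zero hp)))
  set σ : RatFunc K →+* RatFunc K := RatFunc.liftRingHom φp hφ with hσ
  have hσeval : ∀ x : RatFunc K, σ x = RatFunc.eval f0 (RatFunc.X ^ (6 / m)) x := by
    intro x
    rw [hσ, RatFunc.liftRingHom_apply, RatFunc.eval]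
    rfl
  have hσalg : ∀ p : Polynomial K, σ (algebraMap _ _ p) = φp p := by
    intro p
    have := RatFunc.liftRingHom_apply_div φp hφ p 1
    exact RatFunc.liftRingHom_algebraMap φp hφ p
  have hσX : σ RatFunc.X = RatFunc.X ^ (6 / m) := by
    rw [← RatFunc.algebraMap_X, hσalg]
    simp [φp]
  have hσA : σ (A : RatFunc K) = (A : RatFunc K) := map_ratCast σ A
  have hσB : σ (B : RatFunc K) = (B : RatFunc K) := map_ratCast σ B
  have hv : (RatFunc.X : RatFunc K) ^ (k / m) ≠ 0 := pow_ne_zero _ RatFunc.X_ne_zero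
  have e1 : 6 / m * k = k / m * 6 := by
    obtain ⟨a, ha⟩ := hm6
    obtain ⟨b, hb⟩ := hmk
    rw [ha, hb, Nat.mul_div_cancel_left _ hm, Nat.mul_div_cancel_left _ hm]
    ring
  have e2 : 6 / m * m = 6 := Nat.div_mul_cancel hm6
  have hc : σ (RatFunc.X ^ k * ((A : RatFunc K) * RatFunc.X ^ m + (B : RatFunc K))) =
      ((RatFunc.X : RatFunc K) ^ (k / m)) ^ 6 *
        ((A : RatFunc K) * RatFunc.X ^ 6 + (B : RatFunc K)) := by
    rw [map_mul, map_add, map_mul, map_pow, map_pow, hσX, hσA, hσB, ← pow_mul, ← pow_mul,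
      ← pow_mul, e1, e2]
  refine ⟨BCAux.pointMap σ hv hc, BCAux.pointMap_injective σ hv hc, ?_⟩
  intro f g h
  have hx : σ f / ((RatFunc.X : RatFunc K) ^ (k / m)) ^ 2 =
      RatFunc.eval f0 (RatFunc.X ^ (6 / m)) f / RatFunc.X ^ (2 * (k / m)) := by
    rw [hσeval, ← pow_mul, mul_comm]
  have hy : σ g / ((RatFunc.X : RatFunc K) ^ (k / m)) ^ 3 =
      RatFunc.eval f0 (RatFunc.X ^ (6 / m)) g / RatFunc.X ^ (3 * (k / m))  := by
    rw [hσeval, ← pow_mul, mul_comm]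
  have hns := (BCAux.map_nonsingular' σ hv hc (x := f) (y := g)).mpr h
  have hns2 := hns
  rw [hx, hy] at hns2
  exact ⟨hns2, by
    rw [BCAux.pointMap_some]
    exact BCAux.some_congr hx hy _ hns2⟩
end

section
/- Let A, B ∈ ℚ* and define r₁, r₂, r₃, r₄ ∈ {0,1} as in the rank algorithm (rᵢ = 1 iff the corresponding cube and square conditions hold). Then r₁ + r₂ + r₃ + r₄ = 3 if and only if (the class of A in ℚ*/(ℚ*)⁶ lies in {1, (-3)³} and the class of B lies in {2⁴, (-3)³·2⁴}) or (the class of B lies in {1, (-3)³} and the class of A lies in {2⁴, (-3)³·2⁴}). -/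
lemma sixteen_not_cube (q : ℚ) : q ^ 3 ≠ 16 := by
  intro h
  have hq : q ≠ 0 := by
    intro h0; rw [h0] at h; norm_num at h
  have h1 : padicValRat 2 (q ^ 3) = 3 * padicValRat 2 q := padicValRat.pow q
  have h2 : padicValRat 2 (16 : ℚ) = 4 := by
    have h16 : (16 : ℚ) = ((2 : ℕ) : ℚ) ^ 4 := by norm_num
    rw [h16, padicValRat.pow _, padicValRat.self (by norm_num)]
    norm_num
  rw [h, h2] at h1
  omega

lemma classify (X d : ℚ) (hX : X ≠ 0) (hd : d ^ 3 = X)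
    (hx : (∃ x : ℚ, x ^ 2 = X) ∨ (∃ x : ℚ, x ^ 2 = -3 * X)) :
    ∃ c : ℚ, X = c ^ 6 ∨ X = -27 * c ^ 6 := by
  have hd0 : d ≠ 0 := by intro h0; rw [h0] at hd; simp at hd; exact hX hd.symm
  rcases hx with ⟨x, hx⟩ | ⟨x, hx⟩
  · refine ⟨x / d, Or.inl ?_⟩
    rw [div_pow, eq_div_iff (pow_ne_zero _ hd0)]
    linear_combination X * (d ^ 3 + X) * hd - (x ^ 4 + x ^ 2 * X + X ^ 2) * hx
  · refine ⟨x / (3 * d), Or.inr ?_⟩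
    field_simp
    linear_combination 729 * X * (d ^ 3 + X) * hd + 27 * (x ^ 4 - 3 * x ^ 2 * X + 9 * X ^ 2) * hx

lemma classify4 (X d : ℚ) (hX : X ≠ 0) (hd : d ^ 3 = 4 * X)
    (hx : (∃ x : ℚ, x ^ 2 = X) ∨ (∃ x : ℚ, x ^ 2 = -3 * X)) :
    ∃ c : ℚ, X = 16 * c ^ 6 ∨ X = -432 * c ^ 6 := by
  have h16 : (X / 16 : ℚ) ≠ 0 := by
    intro h; apply hX; field_simp at h; simpa using h
  have hd' : (d / 4) ^ 3 = X / 16 := by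
    rw [div_pow]; rw [div_eq_div_iff (by norm_num) (by norm_num)]
    linear_combination 16 * hd
  have hx' : (∃ x : ℚ, x ^ 2 = X / 16) ∨ (∃ x : ℚ, x ^ 2 = -3 * (X / 16)) := by
    rcases hx with ⟨x, hx⟩ | ⟨x, hx⟩
    · refine Or.inl ⟨x / 4, ?_⟩
      rw [div_pow, div_eq_div_iff (by norm_num) (by norm_num)]
      linear_combination 16 * hx
    · refine Or.inr ⟨x / 4, ?_⟩
      rw [div_pow]; field_simp; linear_combination 16 * hx
  obtain ⟨c, hc | hc⟩ := classify (X / 16) (d / 4) h16 hd' hx'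
  · exact ⟨c, Or.inl (by field_simp at hc; linarith)⟩
  · exact ⟨c, Or.inr (by field_simp at hc; linarith)⟩

/-- With r₁,…,r₄ ∈ {0,1} defined by the cube/square conditions on nonzero
rationals A, B, we have r₁ + r₂ + r₃ + r₄ = 3 if and only if
(Ā ∈ {1, (-3)³} and B̄ ∈ {2⁴, (-3)³·2⁴}) or (B̄ ∈ {1, (-3)³} and
Ā ∈ {2⁴, (-3)³·2⁴}) in ℚ*/(ℚ*)⁶. -/
theorem rank_eq_three_iff (A B : ℚ) (hA : A ≠ 0) (hB : B ≠ 0)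
    (r₁ r₂ r₃ r₄ : ℕ)
    (h₁' : r₁ = 0 ∨ r₁ = 1) (h₂' : r₂ = 0 ∨ r₂ = 1)
    (h₃' : r₃ = 0 ∨ r₃ = 1) (h₄' : r₄ = 0 ∨ r₄ = 1)
    (h₁ : r₁ = 1 ↔ (∃ c : ℚ, c ^ 3 = 4 * A * B) ∧
      ((∃ x : ℚ, x ^ 2 = A) ∨ (∃ x : ℚ, x ^ 2 = -3 * A)))
    (h₂ : r₂ = 1 ↔ (∃ c : ℚ, c ^ 3 = A) ∧
      ((∃ x : ℚ, x ^ 2 = B) ∨ (∃ x : ℚ, x ^ 2 = -3 * B)))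
    (h₃ : r₃ = 1 ↔ (∃ c : ℚ, c ^ 3 = B) ∧
      ((∃ x : ℚ, x ^ 2 = A) ∨ (∃ x : ℚ, x ^ 2 = -3 * A)))
    (h₄ : r₄ = 1 ↔ (∃ c : ℚ, c ^ 3 = 4 * A * B) ∧
      ((∃ x : ℚ, x ^ 2 = B) ∨ (∃ x : ℚ, x ^ 2 = -3 * B))) :
    r₁ + r₂ + r₃ + r₄ = 3 ↔
      (((∃ c : ℚ, A = c ^ 6 ∨ A = -27 * c ^ 6) ∧
          (∃ c : ℚ, B = 16 * c ^ 6 ∨ B = -432 * c ^ 6)) ∨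
        ((∃ c : ℚ, B = c ^ 6 ∨ B = -27 * c ^ 6) ∧
          (∃ c : ℚ, A = 16 * c ^ 6 ∨ A = -432 * c ^ 6))) := by
  constructor
  · intro hsum
    rcases h₁' with e1 | e1 <;> rcases h₂' with e2 | e2 <;>
      rcases h₃' with e3 | e3 <;> rcases h₄' with e4 | e4 <;>
      subst e1 <;> subst e2 <;> subst e3 <;> subst e4 <;>
      first
        | omega
        | skip
    -- remaining cases: (0,1,1,1), (1,0,1,1), (1,1,0,1), (1,1,1,0)
    · -- (0,1,1,1): contradiction
      exact absurd (h₁.mpr ⟨(h₄.mp rfl).1, (h₃.mp rfl).2⟩) (by norm_num)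
    · -- (1,0,1,1)
      obtain ⟨⟨d, hd⟩, hPA⟩ := h₁.mp rfl
      obtain ⟨⟨b, hb⟩, -⟩ := h₃.mp rfl
      obtain ⟨-, hPB⟩ := h₄.mp rfl
      have hb0 : b ≠ 0 := by intro h0; rw [h0] at hb; simp at hb; exact hB hb.symm
      have h4A : (d / b) ^ 3 = 4 * A := by
        rw [div_pow, div_eq_iff (pow_ne_zero _ hb0)]
        linear_combination hd - 4 * A * hb
      exact Or.inr ⟨classify B b hB hb hPB, classify4 A (d / b) hA h4A hPA⟩
    · -- (1,1,0,1)
      obtain ⟨⟨d, hd⟩, hPA⟩ := h₁.mp rfl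
      obtain ⟨⟨a, ha⟩, hPB⟩ := h₂.mp rfl
      have ha0 : a ≠ 0 := by intro h0; rw [h0] at ha; simp at ha; exact hA ha.symm
      have h4B : (d / a) ^ 3 = 4 * B := by
        rw [div_pow, div_eq_iff (pow_ne_zero _ ha0)]
        linear_combination hd - 4 * B * ha
      exact Or.inl ⟨classify A a hA ha hPA, classify4 B (d / a) hB h4B hPB⟩
    · -- (1,1,1,0): contradiction
      exact absurd (h₄.mpr ⟨(h₁.mp rfl).1, (h₂.mp rfl).2⟩) (by norm_num)
  · rintro (⟨⟨a, hA'⟩, ⟨b, hB'⟩⟩ | ⟨⟨b, hB'⟩, ⟨a, hA'⟩⟩)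
    · have hPA : (∃ x : ℚ, x ^ 2 = A) ∨ (∃ x : ℚ, x ^ 2 = -3 * A) := by
        rcases hA' with h | h
        · exact Or.inl ⟨a ^ 3, by rw [h]; ring⟩
        · exact Or.inr ⟨9 * a ^ 3, by rw [h]; ring⟩
      have hPB : (∃ x : ℚ, x ^ 2 = B) ∨ (∃ x : ℚ, x ^ 2 = -3 * B) := by
        rcases hB' with h | h
        · exact Or.inl ⟨4 * b ^ 3, by rw [h]; ring⟩
        · exact Or.inr ⟨36 * b ^ 3, by rw [h]; ring⟩
      have hCbA : ∃ c : ℚ, c ^ 3 = A := by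
        rcases hA' with h | h
        · exact ⟨a ^ 2, by rw [h]; ring⟩
        · exact ⟨-3 * a ^ 2, by rw [h]; ring⟩
      have hCb4 : ∃ c : ℚ, c ^ 3 = 4 * A * B := by
        rcases hA' with h | h <;> rcases hB' with h' | h'
        · exact ⟨4 * a ^ 2 * b ^ 2, by rw [h, h']; ring⟩
        · exact ⟨-12 * a ^ 2 * b ^ 2, by rw [h, h']; ring⟩
        · exact ⟨-12 * a ^ 2 * b ^ 2, by rw [h, h']; ring⟩
        · exact ⟨36 * a ^ 2 * b ^ 2, by rw [h, h']; ring⟩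
      have hb0 : b ≠ 0 := by
        intro h0; apply hB; rcases hB' with h | h <;> rw [h, h0] <;> ring
      have hr3 : r₃ = 0 := by
        rcases h₃' with e | e
        · exact e
        · obtain ⟨⟨d, hd⟩, -⟩ := h₃.mp e
          exfalso
          rcases hB' with h | h
          · apply sixteen_not_cube (d / b ^ 2)
            rw [div_pow, div_eq_iff (pow_ne_zero _ (pow_ne_zero _ hb0))]
            linear_combination hd + h
          · apply sixteen_not_cube (d / (-3 * b ^ 2))
            rw [div_pow, div_eq_iff (pow_ne_zero _ (by simp [hb0] : (-3 : ℚ) * b ^ 2 ≠ 0))]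
            linear_combination hd + h
      have hr1 : r₁ = 1 := h₁.mpr ⟨hCb4, hPA⟩
      have hr2 : r₂ = 1 := h₂.mpr ⟨hCbA, hPB⟩
      have hr4 : r₄ = 1 := h₄.mpr ⟨hCb4, hPB⟩
      omega
    · have hPB : (∃ x : ℚ, x ^ 2 = B) ∨ (∃ x : ℚ, x ^ 2 = -3 * B) := by
        rcases hB' with h | h
        · exact Or.inl ⟨b ^ 3, by rw [h]; ring⟩
        · exact Or.inr ⟨9 * b ^ 3, by rw [h]; ring⟩
      have hPA : (∃ x : ℚ, x ^ 2 = A) ∨ (∃ x : ℚ, x ^ 2 = -3 * A) := by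
        rcases hA' with h | h
        · exact Or.inl ⟨4 * a ^ 3, by rw [h]; ring⟩
        · exact Or.inr ⟨36 * a ^ 3, by rw [h]; ring⟩
      have hCbB : ∃ c : ℚ, c ^ 3 = B := by
        rcases hB' with h | h
        · exact ⟨b ^ 2, by rw [h]; ring⟩
        · exact ⟨-3 * b ^ 2, by rw [h]; ring⟩
      have hCb4 : ∃ c : ℚ, c ^ 3 = 4 * A * B := by
        rcases hA' with h | h <;> rcases hB' with h' | h'
        · exact ⟨4 * a ^ 2 * b ^ 2, by rw [h, h']; ring⟩
        · exact ⟨-12 * a ^ 2 * b ^ 2, by rw [h, h']; ring⟩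
        · exact ⟨-12 * a ^ 2 * b ^ 2, by rw [h, h']; ring⟩
        · exact ⟨36 * a ^ 2 * b ^ 2, by rw [h, h']; ring⟩
      have ha0 : a ≠ 0 := by
        intro h0; apply hA; rcases hA' with h | h <;> rw [h, h0] <;> ring
      have hr2 : r₂ = 0 := by
        rcases h₂' with e | e
        · exact e
        · obtain ⟨⟨d, hd⟩, -⟩ := h₂.mp e
          exfalso
          rcases hA' with h | h
          · apply sixteen_not_cube (d / a ^ 2)
            rw [div_pow, div_eq_iff (pow_ne_zero _ (pow_ne_zero _ ha0))]
            linear_combination hd + h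
          · apply sixteen_not_cube (d / (-3 * a ^ 2))
            rw [div_pow, div_eq_iff (pow_ne_zero _ (by simp [ha0] : (-3 : ℚ) * a ^ 2 ≠ 0))]
            linear_combination hd + h
      have hr1 : r₁ = 1 := h₁.mpr ⟨hCb4, hPA⟩
      have hr3 : r₃ = 1 := h₃.mpr ⟨hCbB, hPA⟩
      have hr4 : r₄ = 1 := h₄.mpr ⟨hCb4, hPB⟩
      omega
end
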